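/- Let φ: ℝ^M × ℝ → ℝ be C², and suppose m^FWI: ℝ → ℝ^M is differentiable and satisfies ∇_m φ(m^FWI(α), α) = 0 for all α. Let ψ(α) = ½‖m' - m^FWI(α)‖² for fixed m' ∈ ℝ^M. If the Hessian H(α) = ∇²_m φ(m^FWI(α), α) is invertible and symmetric, then ψ'(α) = ⟨∂_α ∇_m φ(m^FWI(α), α), ρ(α)⟩, where ρ(α) is the unique solution of H(α) ρ(α) = m' - m^FWI(α). -/

import Mathlib

open Matrix

/-- Abstract adjoint-state formula for the derivative of the upper-level objective:
if `G(m^FWI(a), a) = 0` for all `a` (stationarity of the lower-level gradient `G = ∇_m φ`),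
`G` is differentiable at the point with derivative `(v, t) ↦ H v + t gα` (so `H` is the
Hessian and `gα = ∂_α ∇_m φ`), `H` is symmetric and invertible, and `H ρ = m' - m^FWI(α)`,
then `ψ(a) = ½‖m' - m^FWI(a)‖²` satisfies `ψ'(α) = ⟨gα, ρ⟩`. -/
theorem stmt_5 (M : ℕ) (m' : Fin M → ℝ)
    (G : (Fin M → ℝ) → ℝ → (Fin M → ℝ))
    (mF : ℝ → (Fin M → ℝ)) (mF' : Fin M → ℝ) (α : ℝ)
    (H : Matrix (Fin M) (Fin M) ℝ) (gα ρ : Fin M → ℝ)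
    (L : ((Fin M → ℝ) × ℝ) →L[ℝ] (Fin M → ℝ))
    (hL : ∀ v : (Fin M → ℝ) × ℝ, L v = H.mulVec v.1 + v.2 • gα)
    (hstat : ∀ a : ℝ, G (mF a) a = 0)
    (hmF : HasDerivAt mF mF' α)
    (hG : HasFDerivAt (fun q : (Fin M → ℝ) × ℝ => G q.1 q.2) L (mF α, α))
    (hHsym : H.IsSymm) (hHinv : IsUnit H.det)
    (hρ : H.mulVec ρ = m' - mF α) :
    HasDerivAt (fun a => (1 / 2 : ℝ) * ∑ i, (m' i - mF a i) ^ 2) (gα ⬝ᵥ ρ) α := by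
  -- Step 1: differentiate the stationarity condition
  have hpair : HasDerivAt (fun a : ℝ => ((mF a, a) : (Fin M → ℝ) × ℝ)) (mF', 1) α :=
    hmF.prodMk (hasDerivAt_id α)
  have hcomp0 := hG.comp_hasDerivAt_of_eq α hpair rfl
  have hcomp : HasDerivAt (fun a => G (mF a) a) (L (mF', 1)) α := hcomp0
  have hfun : (fun a => G (mF a) a) = fun _ => (0 : Fin M → ℝ) := funext hstat
  rw [hfun] at hcomp
  have hL0 : L (mF', 1) = 0 := hcomp.unique (hasDerivAt_const α 0)
  have hkey : H.mulVec mF' = -gα := by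
    rw [hL (mF', 1)] at hL0
    simp only [one_smul] at hL0
    exact eq_neg_of_add_eq_zero_left hL0
  -- derivative of each coordinate of mF
  have hmFi : ∀ i, HasDerivAt (fun a => mF a i) (mF' i) α := fun i =>
    (ContinuousLinearMap.proj (R := ℝ) (φ := fun _ : Fin M => ℝ) i).hasFDerivAt.comp_hasDerivAt α hmF
  -- derivative of the sum
  have hsum : HasDerivAt (fun a => (1 / 2 : ℝ) * ∑ i, (m' i - mF a i) ^ 2)
      ((1 / 2 : ℝ) * ∑ i, (2 * (m' i - mF α i) * (0 - mF' i))) α := by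
    apply HasDerivAt.const_mul
    apply HasDerivAt.fun_sum
    intro i _
    have h1 : HasDerivAt (fun a => m' i - mF a i) (0 - mF' i) α :=
      (hasDerivAt_const α (m' i)).sub (hmFi i)
    simpa using h1.fun_pow 2
  -- identify the derivative value
  have hval : (1 / 2 : ℝ) * ∑ i, (2 * (m' i - mF α i) * (0 - mF' i)) = gα ⬝ᵥ ρ := by
    have h1 : (1 / 2 : ℝ) * ∑ i, (2 * (m' i - mF α i) * (0 - mF' i))
        = -((m' - mF α) ⬝ᵥ mF') := by
      simp only [dotProduct, Pi.sub_apply, ← Finset.sum_neg_distrib, Finset.mul_sum]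
      congr 1; ext i; ring
    rw [h1, ← hρ]
    have h2 : (H.mulVec ρ) ⬝ᵥ mF' = ρ ⬝ᵥ (H.mulVec mF') := by
      rw [dotProduct_comm, dotProduct_mulVec, ← Matrix.mulVec_transpose, hHsym.eq,
        dotProduct_comm]
    rw [h2, hkey]
    simp [dotProduct_comm]
  rw [← hval]
  exact hsum
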